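/- arXiv:1310.2208 — 3 statements merged into one kernel-verified Lean document; each statement's English description precedes it below -/
import Mathlib

section
/- Let E0 and E1 be filters with support intervals [−r0, r0] (centered at 0) and [−r1−1, r1−1] (centered at −1) respectively, and let S(z) be a filter with support interval [−t+1, t], t ≥ 1. If r0 ≤ r1 + 2t − 2, then E0'(z) = E0(z) + S(z^2)·E1(z) has support interval [−r1−2t+1, r1+2t−1], i.e., centered at 0 with support radius r1 + 2t − 1. -/
noncomputable section

/-- FIR filters: Laurent polynomials over ℝ, `F(z) = Σ f(n) z^{-n}`,
represented by their coefficient function `n ↦ f n`; multiplication is convolution. -/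
abbrev Filt := AddMonoidAlgebra ℝ ℤ

/-- `SuppInt f a b` : the support interval of `f` is `[a,b]` (so `f` is a
nonzero FIR filter with `f a, f b ≠ 0` and all support in `[a,b]`). -/
def SuppInt (f : Filt) (a b : ℤ) : Prop :=
  f.coeff a ≠ 0 ∧ f.coeff b ≠ 0 ∧ ∀ n, f.coeff n ≠ 0 → a ≤ n ∧ n ≤ b

/-- Upsampling: `F(z) ↦ F(z²)`, i.e. `Σ f(n) z^{-2n}`. -/
def up (f : Filt) : Filt := AddMonoidAlgebra.ofCoeff (Finsupp.mapDomain (fun n : ℤ => 2 * n) f.coeff)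

lemma mul_apply_top (f g : Filt) (b d : ℤ) (hf : ∀ n, f.coeff n ≠ 0 → n ≤ b)
    (hg : ∀ n, g.coeff n ≠ 0 → n ≤ d) : (f * g).coeff (b + d) = f.coeff b * g.coeff d := by
  rw [AddMonoidAlgebra.coeff_mul]
  rw [Finsupp.sum]
  rw [Finset.sum_eq_single b]
  · rw [Finsupp.sum, Finset.sum_eq_single d]
    · simp
    · intro a2 h2 hne
      have : b + a2 ≠ b + d := by omega
      simp [this]
    · intro hd
      simp [Finsupp.notMem_support_iff.mp hd]
  · intro a1 h1 hne
    have ha1 : a1 ≤ b := hf a1 (Finsupp.mem_support_iff.mp h1)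
    rw [Finsupp.sum]
    apply Finset.sum_eq_zero
    intro a2 h2
    have ha2 : a2 ≤ d := hg a2 (Finsupp.mem_support_iff.mp h2)
    have : a1 + a2 ≠ b + d := by omega
    simp [this]
  · intro hb
    simp [Finsupp.notMem_support_iff.mp hb, Finsupp.sum]

lemma mul_apply_bot (f g : Filt) (a c : ℤ) (hf : ∀ n, f.coeff n ≠ 0 → a ≤ n)
    (hg : ∀ n, g.coeff n ≠ 0 → c ≤ n) : (f * g).coeff (a + c) = f.coeff a * g.coeff c := by
  rw [AddMonoidAlgebra.coeff_mul]
  rw [Finsupp.sum]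
  rw [Finset.sum_eq_single a]
  · rw [Finsupp.sum, Finset.sum_eq_single c]
    · simp
    · intro a2 h2 hne
      have : a + a2 ≠ a + c := by omega
      simp [this]
    · intro hd
      simp [Finsupp.notMem_support_iff.mp hd]
  · intro a1 h1 hne
    have ha1 : a ≤ a1 := hf a1 (Finsupp.mem_support_iff.mp h1)
    rw [Finsupp.sum]
    apply Finset.sum_eq_zero
    intro a2 h2
    have ha2 : c ≤ a2 := hg a2 (Finsupp.mem_support_iff.mp h2)
    have : a1 + a2 ≠ a + c := by omega
    simp [this]
  · intro hb
    simp [Finsupp.notMem_support_iff.mp hb, Finsupp.sum]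

lemma up_apply (f : Filt) (n : ℤ) : (up f).coeff (2 * n) = f.coeff n :=
  Finsupp.mapDomain_apply (fun x y h => by omega) f.coeff n

lemma up_supp (f : Filt) (n : ℤ) (h : (up f).coeff n ≠ 0) : ∃ m, n = 2 * m ∧ f.coeff m ≠ 0 := by
  have := Finsupp.mapDomain_support (f := fun n : ℤ => 2 * n) (s := f.coeff)
      (Finsupp.mem_support_iff.mpr h)
  simp only [Finset.mem_image, Finsupp.mem_support_iff] at this
  obtain ⟨m, hm, he⟩ := this
  exact ⟨m, he.symm, hm⟩

lemma suppInt_mul {f g : Filt} {a b c d : ℤ} (hf : SuppInt f a b) (hg : SuppInt g c d) :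
    SuppInt (f * g) (a + c) (b + d) := by
  obtain ⟨hfa, hfb, hfs⟩ := hf
  obtain ⟨hga, hgb, hgs⟩ := hg
  refine ⟨?_, ?_, ?_⟩
  · rw [mul_apply_bot f g a c (fun n h => (hfs n h).1) (fun n h => (hgs n h).1)]
    exact mul_ne_zero hfa hga
  · rw [mul_apply_top f g b d (fun n h => (hfs n h).2) (fun n h => (hgs n h).2)]
    exact mul_ne_zero hfb hgb
  · intro n hn
    rw [AddMonoidAlgebra.coeff_mul] at hn
    by_contra hc
    apply hn
    rw [Finsupp.sum]; apply Finset.sum_eq_zero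
    intro a1 h1
    rw [Finsupp.sum]; apply Finset.sum_eq_zero
    intro a2 h2
    have w1 := hfs a1 (Finsupp.mem_support_iff.mp h1)
    have w2 := hgs a2 (Finsupp.mem_support_iff.mp h2)
    have : a1 + a2 ≠ n := by omega
    simp [this]

/-- the lowpass WS lifting update `E₀'(z) = E₀(z) + S(z²) E₁(z)`. -/
theorem ws_lowpass_lift_suppInt (E0 E1 S : Filt) (r0 r1 t : ℤ) (ht : 1 ≤ t)
    (h0 : SuppInt E0 (-r0) r0) (h1 : SuppInt E1 (-r1 - 1) (r1 - 1))
    (hS : SuppInt S (-t + 1) t) (hle : r0 ≤ r1 + 2 * t - 2) :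
    SuppInt (E0 + up S * E1) (-r1 - 2 * t + 1) (r1 + 2 * t - 1) := by
  obtain ⟨hSa, hSb, hSs⟩ := hS
  have hup : SuppInt (up S) (2 * (-t + 1)) (2 * t) := by
    refine ⟨by rw [up_apply]; exact hSa, by rw [up_apply]; exact hSb, ?_⟩
    intro n hn
    obtain ⟨m, rfl, hm⟩ := up_supp S n hn
    have := hSs m hm
    omega
  have hmul := suppInt_mul hup h1
  obtain ⟨hma, hmb, hms⟩ := hmul
  obtain ⟨_, _, h0s⟩ := h0
  have e0lo : E0.coeff (-r1 - 2 * t + 1) = 0 := by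
    by_contra h; have := h0s _ h; omega
  have e0hi : E0.coeff (r1 + 2 * t - 1) = 0 := by
    by_contra h; have := h0s _ h; omega
  have ea : 2 * (-t + 1) + (-r1 - 1) = -r1 - 2 * t + 1 := by ring
  have eb : 2 * t + (r1 - 1) = r1 + 2 * t - 1 := by ring
  rw [ea] at hma; rw [eb] at hmb
  refine ⟨?_, ?_, ?_⟩
  · rw [AddMonoidAlgebra.coeff_add, Finsupp.add_apply, e0lo, zero_add]; exact hma
  · rw [AddMonoidAlgebra.coeff_add, Finsupp.add_apply, e0hi, zero_add]; exact hmb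
  · intro n hn
    rw [AddMonoidAlgebra.coeff_add, Finsupp.add_apply] at hn
    rcases eq_or_ne (E0.coeff n) 0 with h | h
    · rw [h, zero_add] at hn
      have := hms n hn; omega
    · have := h0s n h
      rcases eq_or_ne ((up S * E1).coeff n) 0 with h2 | h2
      · omega
      · have := hms n h2; omega
end
end

section
/- Consider an irreducible HS lifting cascade from a base filter bank whose two filters both have support interval [−r^(−1), r^(−1)−1] (concentric, equal-length, centered at −1/2), using WA lifting filters S_n with support intervals [−t^(n), t^(n)], t^(n) ≥ 1. Then for each n ≥ 0, both intermediate filters E^(n)_0, E^(n)_1 have support intervals centered at −1/2, and the lifted filter's support radius satisfies r^(n)_{m_n} = r^(n)_{1−m_n} + 2t^(n), with r^(0)_{1−m_0} = r^(−1). -/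
noncomputable section

lemma up_ne (f : Filt) (k : ℤ) (h : (up f).coeff k ≠ 0) : ∃ n, f.coeff n ≠ 0 ∧ k = 2 * n := by
  have hk : k ∈ (up f).coeff.support := Finsupp.mem_support_iff.2 h
  have h2 := Finsupp.mapDomain_support hk
  obtain ⟨n, hn, hnk⟩ := Finset.mem_image.1 h2
  exact ⟨n, Finsupp.mem_support_iff.1 hn, hnk.symm⟩

lemma mul_apply_unique (f g : Filt) (p q : ℤ)
    (h : ∀ a b, f.coeff a ≠ 0 → g.coeff b ≠ 0 → a + b = p + q → a = p ∧ b = q) :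
    (f * g).coeff (p + q) = f.coeff p * g.coeff q := by
  classical
  rw [AddMonoidAlgebra.coeff_mul]
  unfold Finsupp.sum
  rw [Finset.sum_eq_single p]
  · beta_reduce
    rw [Finset.sum_eq_single q]
    · simp
    · intro b hb hbq
      have : ¬ (p + b = p + q) := fun hc => hbq (by omega)
      simp [this]
    · intro hq
      have : g.coeff q = 0 := Finsupp.notMem_support_iff.1 hq
      simp [this]
  · intro a ha hap
    have hfa : f.coeff a ≠ 0 := Finsupp.mem_support_iff.1 ha
    apply Finset.sum_eq_zero
    intro b hb
    have hgb : g.coeff b ≠ 0 := Finsupp.mem_support_iff.1 hb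
    have : ¬ (a + b = p + q) := fun hc => hap (h a b hfa hgb hc).1
    simp [this]
  · intro hp
    have : f.coeff p = 0 := Finsupp.notMem_support_iff.1 hp
    apply Finset.sum_eq_zero
    intro b _
    simp [this]

lemma conv_suppInt (S B : Filt) (t b : ℤ) (ht : 1 ≤ t)
    (hS : SuppInt S (-t) t) (hB : SuppInt B (-b) (b - 1)) :
    SuppInt (up S * B) (-(b + 2 * t)) (b + 2 * t - 1) := by
  obtain ⟨hSl, hSr, hSs⟩ := hS
  obtain ⟨hBl, hBr, hBs⟩ := hB
  have hup : ∀ k, (up S).coeff k ≠ 0 → -(2 * t) ≤ k ∧ k ≤ 2 * t := by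
    intro k hk
    obtain ⟨n, hn, rfl⟩ := up_ne S k hk
    have := hSs n hn
    omega
  have key1 : (up S * B).coeff (-(b + 2 * t)) = (up S).coeff (2 * -t) * B.coeff (-b) := by
    have he : -(b + 2 * t) = (2 * -t) + (-b) := by ring
    rw [he]
    apply mul_apply_unique
    intro a c ha hc hac
    have h1 := hup a ha
    have h2 := hBs c hc
    omega
  have key2 : (up S * B).coeff (b + 2 * t - 1) = (up S).coeff (2 * t) * B.coeff (b - 1) := by
    have he : b + 2 * t - 1 = (2 * t) + (b - 1) := by ring
    rw [he]
    apply mul_apply_unique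
    intro a c ha hc hac
    have h1 := hup a ha
    have h2 := hBs c hc
    omega
  refine ⟨?_, ?_, ?_⟩
  · rw [key1, up_apply]; exact mul_ne_zero hSl hBl
  · rw [key2, up_apply]; exact mul_ne_zero hSr hBr
  · intro x hx
    have hsub := AddMonoidAlgebra.support_coeff_mul_subset (up S) B
    have hx' : x ∈ ((up S * B).coeff.support) := Finsupp.mem_support_iff.2 hx
    have := hsub hx'
    rw [Finset.mem_add] at this
    obtain ⟨a, ha, c, hc, rfl⟩ := this
    have h1 := hup a (Finsupp.mem_support_iff.1 ha)
    have h2 := hBs c (Finsupp.mem_support_iff.1 hc)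
    omega

lemma add_suppInt (A C : Filt) (a c : ℤ) (hac : a < c)
    (hA : SuppInt A (-a) (a - 1)) (hC : SuppInt C (-c) (c - 1)) :
    SuppInt (A + C) (-c) (c - 1) := by
  obtain ⟨hAl, hAr, hAs⟩ := hA
  obtain ⟨hCl, hCr, hCs⟩ := hC
  have hA0 : ∀ x, x < -a ∨ a - 1 < x → A.coeff x = 0 := by
    intro x hx
    by_contra h
    have := hAs x h
    omega
  refine ⟨?_, ?_, ?_⟩
  · rw [AddMonoidAlgebra.coeff_add, Finsupp.add_apply, hA0 (-c) (by omega), zero_add]; exact hCl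
  · rw [AddMonoidAlgebra.coeff_add, Finsupp.add_apply, hA0 (c - 1) (by omega), zero_add]; exact hCr
  · intro x hx
    rw [AddMonoidAlgebra.coeff_add, Finsupp.add_apply] at hx
    by_cases hAx : A.coeff x = 0
    · have : C.coeff x ≠ 0 := by rw [hAx, zero_add] at hx; exact hx
      exact hCs x this
    · have := hAs x hAx
      omega

lemma lift_suppInt (S A B : Filt) (t a b : ℤ) (ht : 1 ≤ t) (hab : a ≤ b)
    (hS : SuppInt S (-t) t) (hA : SuppInt A (-a) (a - 1)) (hB : SuppInt B (-b) (b - 1)) :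
    SuppInt (A + up S * B) (-(b + 2 * t)) (b + 2 * t - 1) :=
  add_suppInt A _ a (b + 2 * t) (by omega) hA (conv_suppInt S B t b ht hS hB)

/-- the HS support interval formula.  For an irreducible HS lifting
cascade from a concentric equal-length base filter bank (both base filters with
support interval `[−r⁽⁻¹⁾, r⁽⁻¹⁾−1]`), using WA lifting filters `S n` with
support intervals `[−t n, t n]`, `t n ≥ 1`, both intermediate filters are
centered at −1/2 and the lifted radius satisfies
`r⁽ⁿ⁾_{mₙ} = r⁽ⁿ⁾_{1−mₙ} + 2 tⁿ` with `r⁽⁰⁾_{1−m₀} = r⁽⁻¹⁾`. -/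
theorem hs_support_formula (N : ℕ) (S : ℕ → Filt) (m : ℕ → Bool) (t : ℕ → ℤ)
    (P : ℕ → Bool → Filt) (B : Bool → Filt) (rb : ℤ)
    (hrb : 1 ≤ rb)
    (halt : ∀ n, m (n + 1) = !(m n))
    (ht : ∀ n, n < N → 1 ≤ t n)
    (hSanti : ∀ n, n < N → ∀ k : ℤ, (S n).coeff (-k) = -((S n).coeff k))
    (hSsupp : ∀ n, n < N → SuppInt (S n) (-(t n)) (t n))
    (hBsupp : ∀ i, SuppInt (B i) (-rb) (rb - 1))
    (hbase : ∀ i, P 0 i = B i)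
    (hlift : ∀ n, n < N → P (n + 1) (m n) = P n (m n) + up (S n) * P n (!(m n)))
    (hkeep : ∀ n, n < N → P (n + 1) (!(m n)) = P n (!(m n))) :
    ∀ n, n < N → ∃ r0 r1 : ℤ,
      SuppInt (P (n + 1) false) (-r0) (r0 - 1) ∧
      SuppInt (P (n + 1) true) (-r1) (r1 - 1) ∧
      cond (m n) r1 r0 = cond (m n) r0 r1 + 2 * t n ∧
      (n = 0 → cond (m 0) r0 r1 = rb) := by
  have main : ∀ n, n ≤ N → ∃ ra rc : ℤ,
      SuppInt (P n false) (-ra) (ra - 1) ∧ SuppInt (P n true) (-rc) (rc - 1) ∧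
      cond (m n) rc ra ≤ cond (m n) ra rc ∧ (n = 0 → ra = rb ∧ rc = rb) := by
    intro n
    induction n with
    | zero =>
      intro _
      refine ⟨rb, rb, ?_, ?_, ?_, fun _ => ⟨rfl, rfl⟩⟩
      · rw [hbase]; exact hBsupp false
      · rw [hbase]; exact hBsupp true
      · cases m 0 <;> simp
    | succ n ih =>
      intro hn1
      have hn : n < N := by omega
      obtain ⟨ra, rc, hF, hT, hle, _⟩ := ih (by omega)
      have hliftn := hlift n hn
      have hkeepn := hkeep n hn
      have haltn := halt n
      cases hm : m n with
      | true =>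
        rw [hm] at hliftn hkeepn hle haltn
        simp only [Bool.not_true, cond_true, cond_false] at hliftn hkeepn hle
        refine ⟨ra, ra + 2 * t n, ?_, ?_, ?_, by omega⟩
        · rw [hkeepn]; exact hF
        · rw [hliftn]
          exact lift_suppInt (S n) (P n true) (P n false) (t n) rc ra (ht n hn) hle
            (hSsupp n hn) hT hF
        · rw [haltn, Bool.not_true]
          simp only [cond_false]
          have := ht n hn
          omega
      | false =>
        rw [hm] at hliftn hkeepn hle haltn
        simp only [Bool.not_false, cond_true, cond_false] at hliftn hkeepn hle
        refine ⟨rc + 2 * t n, rc, ?_, ?_, ?_, by omega⟩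
        · rw [hliftn]
          exact lift_suppInt (S n) (P n false) (P n true) (t n) ra rc (ht n hn) hle
            (hSsupp n hn) hF hT
        · rw [hkeepn]; exact hT
        · rw [haltn, Bool.not_false]
          simp only [cond_true]
          have := ht n hn
          omega
  intro n hn
  obtain ⟨ra, rc, hF, hT, hle, h00⟩ := main n (by omega)
  have hliftn := hlift n hn
  have hkeepn := hkeep n hn
  cases hm : m n with
  | true =>
    rw [hm] at hliftn hkeepn hle
    simp only [Bool.not_true, cond_true, cond_false] at hliftn hkeepn hle
    refine ⟨ra, ra + 2 * t n, ?_, ?_, ?_, ?_⟩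
    · rw [hkeepn]; exact hF
    · rw [hliftn]
      exact lift_suppInt (S n) (P n true) (P n false) (t n) rc ra (ht n hn) hle
        (hSsupp n hn) hT hF
    · simp
    · intro h0
      subst h0
      rw [hm]
      simp only [cond_true]
      exact (h00 rfl).1
  | false =>
    rw [hm] at hliftn hkeepn hle
    simp only [Bool.not_false, cond_true, cond_false] at hliftn hkeepn hle
    refine ⟨rc + 2 * t n, rc, ?_, ?_, ?_, ?_⟩
    · rw [hliftn]
      exact lift_suppInt (S n) (P n false) (P n true) (t n) ra rc (ht n hn) hle
        (hSsupp n hn) hF hT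
    · rw [hkeepn]; exact hT
    · simp
    · intro h0
      subst h0
      rw [hm]
      simp only [cond_false]
      exact (h00 rfl).2
end
end

section
/- Suppose a lifting cascade satisfies: (1) the two base polyphase filter vectors have equal polyphase support intervals, and (2) at every step n ≥ 0 the polyphase support interval of the non-lifted filter vector is strictly contained in that of the lifted filter vector, and the cascade is irreducible (the update characteristic alternates). Then the polyphase orders of the intermediate polyphase matrices E^(n) are strictly increasing in n: order(E^(n)) > order(E^(n−1)) for all n ≥ 0, where E^(−1) = B. -/
lemma icc_ssub_facts {a b a' b' : ℤ} (h1 : a' ≤ b')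
    (h : Finset.Icc a' b' ⊂ Finset.Icc a b) :
    a ≤ a' ∧ b' ≤ b ∧ (a < a' ∨ b' < b) := by
  have hsub := h.subset
  rw [Finset.Icc_subset_Icc_iff h1] at hsub
  refine ⟨hsub.1, hsub.2, ?_⟩
  by_contra hc
  push_neg at hc
  exact h.2 (Finset.Icc_subset_Icc hc.1 hc.2)

/-- sufficient conditions for a lifting cascade to be strictly
polyphase order-increasing.  Here `a k i`, `b k i` are the endpoints of the
polyphase support interval of the `i`-th polyphase filter vector of `E⁽ᵏ⁻¹⁾`
(so `k = 0` is the base `B`): intervals are nonempty, the two base intervals are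
equal, the update characteristic `m` alternates, the non-lifted vector is
unchanged at each step, and its interval is strictly contained in that of the
lifted vector.  Then the polyphase order
`order(E⁽ᵏ⁻¹⁾) = max(b k) − min(a k)` is strictly increasing. -/
theorem order_increasing_of_covering (m : ℕ → Bool) (a b : ℕ → Bool → ℤ)
    (hne : ∀ k i, a k i ≤ b k i)
    (hbase_a : a 0 false = a 0 true) (hbase_b : b 0 false = b 0 true)
    (halt : ∀ n, m (n + 1) = !(m n))
    (hkeep_a : ∀ n, a (n + 1) (!(m n)) = a n (!(m n)))
    (hkeep_b : ∀ n, b (n + 1) (!(m n)) = b n (!(m n)))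
    (hcov : ∀ n, Finset.Icc (a (n + 1) (!(m n))) (b (n + 1) (!(m n))) ⊂
      Finset.Icc (a (n + 1) (m n)) (b (n + 1) (m n))) :
    ∀ n : ℕ,
      max (b n false) (b n true) - min (a n false) (a n true) <
      max (b (n + 1) false) (b (n + 1) true) - min (a (n + 1) false) (a (n + 1) true) := by
  intro n
  -- facts at level n+1 from hcov n
  obtain ⟨hA, hB, hS⟩ := icc_ssub_facts (hne (n + 1) (!(m n))) (hcov n)
  -- facts at level n: a n (!(m n)) ≤ a n (m n) and b n (m n) ≤ b n (!(m n))
  have hprev : a n (!(m n)) ≤ a n (m n) ∧ b n (m n) ≤ b n (!(m n)) := by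
    cases n with
    | zero =>
      cases hm : m 0 <;> simp [hm] <;>
        simp [hbase_a, hbase_b, le_refl]
    | succ k =>
      obtain ⟨hA', hB', _⟩ := icc_ssub_facts (hne (k + 1) (!(m k))) (hcov k)
      have h1 : m (k + 1) = !(m k) := halt k
      have h2 : (!(m (k + 1))) = m k := by rw [h1, Bool.not_not]
      rw [h1]; simp only [Bool.not_not]
      exact ⟨hA', hB'⟩
  have hka := hkeep_a n
  have hkb := hkeep_b n
  cases hm : m n <;> rw [hm] at hA hB hS hprev hka hkb <;>
    simp only [Bool.not_false, Bool.not_true] at hA hB hS hprev hka hkb <;> omega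
end
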